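/- The integral of (1 − e^{−y²})/y² over the real line equals 2√π: ∫_ℝ (1 − e^{−y²})/y² dy = 2√π. -/

import Mathlib

open MeasureTheory Real Set Filter

lemma aux_integrable : Integrable (fun y : ℝ => (1 - Real.exp (-y ^ 2)) / y ^ 2) := by
  have hmeas : AEStronglyMeasurable (fun y : ℝ => (1 - Real.exp (-y ^ 2)) / y ^ 2)
      (volume : Measure ℝ) := by
    apply Measurable.aestronglyMeasurable
    measurability
  refine (integrable_inv_one_add_sq.const_mul 2).mono' hmeas ?_
  filter_upwards with y
  rcases eq_or_ne y 0 with rfl | hy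
  · simp
  have hy2 : 0 < y ^ 2 := by positivity
  have h1 : Real.exp (-y ^ 2) ≤ 1 := by
    rw [Real.exp_le_one_iff]; nlinarith
  have h2 : 1 - y ^ 2 ≤ Real.exp (-y ^ 2) := by
    have := Real.add_one_le_exp (-y ^ 2); linarith
  have hnn : 0 ≤ (1 - Real.exp (-y ^ 2)) / y ^ 2 := by
    apply div_nonneg <;> nlinarith
  have h3 : (0:ℝ) < 1 + y ^ 2 := by positivity
  rw [Real.norm_eq_abs, abs_of_nonneg hnn, inv_eq_one_div, mul_one_div,
    div_le_div_iff₀ hy2 h3]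
  nlinarith [Real.exp_pos (-y ^ 2)]

lemma aux_even : ∫ y : ℝ, (1 - Real.exp (-y ^ 2)) / y ^ 2
    = 2 * ∫ y in Ioi (0:ℝ), (1 - Real.exp (-y ^ 2)) / y ^ 2 := by
  rw [← intervalIntegral.integral_Iic_add_Ioi (b := (0:ℝ)) aux_integrable.integrableOn
    aux_integrable.integrableOn, two_mul]
  congr 1
  have := integral_comp_neg_Iic (0:ℝ) (fun y : ℝ => (1 - Real.exp (-y ^ 2)) / y ^ 2)
  simp only [neg_zero] at this
  rw [← this]
  apply setIntegral_congr_fun measurableSet_Iic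
  intro x _
  simp [neg_pow]

theorem integral_one_sub_exp_neg_sq_div_sq :
    ∫ y : ℝ, (1 - Real.exp (-y ^ 2)) / y ^ 2 = 2 * Real.sqrt π := by
  set g : ℝ → ℝ := fun y => (1 - Real.exp (-y ^ 2)) / y ^ 2 with hg
  set F : ℝ → ℝ := fun y => (Real.exp (-y ^ 2) - 1) / y with hF
  have hexp : Integrable (fun y : ℝ => Real.exp (-y ^ 2)) := by
    have := integrable_exp_neg_mul_sq (one_pos (α := ℝ))
    simpa using this
  -- F is continuous within Ici 0 at 0
  have hd0 : HasDerivAt (fun y : ℝ => Real.exp (-y ^ 2)) 0 0 := by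
    have h1 : HasDerivAt (fun y : ℝ => -y ^ 2) (-(2 * (0:ℝ) ^ 1)) 0 := by
      simpa using (hasDerivAt_pow 2 (0:ℝ)).fun_neg
    have := (Real.hasDerivAt_exp (-(0:ℝ) ^ 2)).comp 0 h1
    simpa [Function.comp_def] using this
  have hslope : Tendsto F (nhdsWithin 0 {(0:ℝ)}ᶜ) (nhds 0) := by
    have h := hasDerivAt_iff_tendsto_slope.mp hd0
    apply h.congr'
    filter_upwards [self_mem_nhdsWithin] with y hy
    simp [slope_def_field, hF, div_eq_mul_inv]
  have hcont : ContinuousWithinAt F (Ici 0) 0 := by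
    rw [← continuousWithinAt_Ioi_iff_Ici]
    have hF0 : F 0 = 0 := by simp [hF]
    rw [ContinuousWithinAt, hF0]
    exact hslope.mono_left (nhdsWithin_mono _ (fun x hx => ne_of_gt hx))
  -- derivative of F on Ioi 0
  have hderiv : ∀ y ∈ Ioi (0:ℝ), HasDerivAt F (g y - 2 * Real.exp (-y ^ 2)) y := by
    intro y hy
    have hy0 : y ≠ 0 := ne_of_gt hy
    have h1 : HasDerivAt (fun y : ℝ => -y ^ 2) (-(2 * y)) y := by
      simpa using (hasDerivAt_pow 2 y).fun_neg
    have h2 : HasDerivAt (fun y : ℝ => Real.exp (-y ^ 2))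
        (Real.exp (-y ^ 2) * (-(2 * y))) y := (Real.hasDerivAt_exp _).comp y h1
    have h3 : HasDerivAt (fun y : ℝ => Real.exp (-y ^ 2) - 1)
        (Real.exp (-y ^ 2) * (-(2 * y))) y := h2.sub_const 1
    have h4 : HasDerivAt F
        ((Real.exp (-y ^ 2) * (-(2 * y)) * y - (Real.exp (-y ^ 2) - 1) * 1) / y ^ 2) y :=
      h3.div (hasDerivAt_id y) hy0
    convert h4 using 1
    simp only [hg]
    field_simp
    ring
  -- integrability of the derivative
  have hint : IntegrableOn (fun y : ℝ => g y - 2 * Real.exp (-y ^ 2)) (Ioi 0) := by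
    exact (aux_integrable.sub (hexp.const_mul 2)).integrableOn
  -- F tends to 0 at infinity
  have htop : Tendsto F atTop (nhds 0) := by
    have h1 : Tendsto (fun y : ℝ => Real.exp (-y ^ 2) - 1) atTop (nhds (0 - 1)) := by
      apply Tendsto.sub_const
      apply Real.tendsto_exp_atBot.comp
      apply tendsto_neg_atBot_iff.mpr
      exact tendsto_pow_atTop (two_ne_zero)
    have h2 : Tendsto (fun y : ℝ => y⁻¹) atTop (nhds 0) := tendsto_inv_atTop_zero
    have := h1.mul h2
    simp only [mul_zero] at this
    apply this.congr
    intro y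
    simp [hF, div_eq_mul_inv]
  have hFTC : ∫ y in Ioi (0:ℝ), (g y - 2 * Real.exp (-y ^ 2)) = 0 - F 0 :=
    integral_Ioi_of_hasDerivAt_of_tendsto hcont hderiv hint htop
  have hF0 : F 0 = 0 := by simp [hF]
  rw [hF0, sub_zero] at hFTC
  have hsplit : ∫ y in Ioi (0:ℝ), g y
      = (∫ y in Ioi (0:ℝ), (g y - 2 * Real.exp (-y ^ 2)))
        + ∫ y in Ioi (0:ℝ), 2 * Real.exp (-y ^ 2) := by
    rw [← integral_add hint ((hexp.const_mul 2).integrableOn)]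
    apply setIntegral_congr_fun measurableSet_Ioi
    intro y _
    ring
  have hgauss : ∫ y in Ioi (0:ℝ), 2 * Real.exp (-y ^ 2) = Real.sqrt π := by
    rw [integral_const_mul]
    have := integral_gaussian_Ioi 1
    simp only [neg_mul, one_mul] at this
    rw [this]
    rw [div_one]
    ring
  calc ∫ y : ℝ, g y = 2 * ∫ y in Ioi (0:ℝ), g y := aux_even
    _ = 2 * Real.sqrt π := by rw [hsplit, hFTC, zero_add, hgauss]
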